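/- Suppose X satisfies the δ-annular decay property and u is a nonnegative β-Hölder continuous function with β > 0 and α + β ≤ δ, where α > 0. Then for fixed r > 0, the function v(x) = r^α u_{B(x,r)} satisfies |v(x) − v(y)| ≤ C d(x,y)^{α+β} ‖u‖_{C^{0,β}} for all x, y ∈ X, with C independent of r, x, y, u. -/

import Mathlib

set_option maxHeartbeats 1000000

open MeasureTheory Metric
open scoped ENNReal

section Aux

variable {X : Type*} [MeasurableSpace X] {μ : Measure X}

/-- If `f` is a.e. strongly measurable with respect to `μ.restrict s` and a (measurable)
predicate `p` holds for `f z` at every point `z ∈ s`, then `p (f z)` holds a.e. with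
respect to `μ.restrict s` (even when `s` itself is not measurable). -/
lemma ae_restrict_of_forall_mem' {s : Set X} {f : X → ℝ}
    (hf : AEStronglyMeasurable f (μ.restrict s))
    {p : ℝ → Prop} (hp : MeasurableSet {t : ℝ | p t})
    (h : ∀ z ∈ s, p (f z)) : ∀ᵐ z ∂μ.restrict s, p (f z) := by
  obtain ⟨g, hg, hfg⟩ := hf
  have hD : μ.restrict s {z | f z ≠ g z} = 0 := by
    have := hfg
    rw [Filter.EventuallyEq, ae_iff] at this
    simpa using this
  obtain ⟨t, hDt, htm, ht0⟩ := exists_measurable_superset_of_null hD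
  have hgm : Measurable g := hg.measurable
  have hEm : MeasurableSet {z | ¬ p (g z)} := hgm hp.compl
  have hE0 : μ.restrict s {z | ¬ p (g z)} = 0 := by
    rw [Measure.restrict_apply hEm]
    rw [Measure.restrict_apply htm] at ht0
    refine measure_mono_null (fun z hz => ?_) ht0
    obtain ⟨hz1, hz2⟩ := hz
    exact ⟨hDt (fun he => hz1 (he ▸ h z hz2)), hz2⟩
  rw [ae_iff]
  refine measure_mono_null (fun z hz => ?_) (measure_union_null hE0 hD)
  by_cases hzg : f z = g z
  · exact Or.inl (by simp only [Set.mem_setOf_eq, ← hzg]; exact hz)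
  · exact Or.inr hzg

/-- The average of `u` over a set differs from `u z` by at most `M` provided
`|u z - u w| ≤ M` for all `w` in the set. -/
lemma abs_sub_setAverage_le' {s : Set X} (h0 : μ s ≠ 0) (hfin : μ s ≠ ⊤)
    {u : X → ℝ} (hu : IntegrableOn u s μ) (z : X) {M : ℝ}
    (hb : ∀ w ∈ s, |u z - u w| ≤ M) :
    |u z - ⨍ w in s, u w ∂μ| ≤ M := by
  haveI : IsFiniteMeasure (μ.restrict s) :=
    ⟨by rw [Measure.restrict_apply_univ]; exact lt_top_iff_ne_top.2 hfin⟩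
  have ha0 : 0 < (μ s).toReal := ENNReal.toReal_pos h0 hfin
  have hub : ∀ᵐ w ∂μ.restrict s, u w ≤ u z + M := by
    have hset : MeasurableSet {t : ℝ | t ≤ u z + M} := measurableSet_Iic
    refine ae_restrict_of_forall_mem' hu.1 hset (fun w hw => ?_)
    have := hb w hw; rw [abs_le] at this
    show u w ≤ u z + M
    linarith [this.1]
  have hlb : ∀ᵐ w ∂μ.restrict s, u z - M ≤ u w := by
    have hset : MeasurableSet {t : ℝ | u z - M ≤ t} := measurableSet_Ici
    refine ae_restrict_of_forall_mem' hu.1 hset (fun w hw => ?_)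
    have := hb w hw; rw [abs_le] at this
    show u z - M ≤ u w
    linarith [this.2]
  have habs : ∀ᵐ w ∂μ.restrict s, |u z - u w| ≤ M := by
    filter_upwards [hub, hlb] with w h1 h2
    rw [abs_le]; constructor <;> linarith
  have hint2 : Integrable (fun w => u z - u w) (μ.restrict s) :=
    (integrable_const _).sub hu
  have h1 : ∫ w in s, (u z - u w) ∂μ = (μ s).toReal * u z - ∫ w in s, u w ∂μ := by
    rw [integral_sub (integrable_const _) hu, integral_const]
    simp [Measure.restrict_apply_univ, smul_eq_mul, measureReal_def]
  have h2 : |∫ w in s, (u z - u w) ∂μ| ≤ M * (μ s).toReal := by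
    calc |∫ w in s, (u z - u w) ∂μ| ≤ ∫ w in s, |u z - u w| ∂μ := by
          simpa [Real.norm_eq_abs] using
            norm_integral_le_integral_norm (μ := μ.restrict s) (fun w => u z - u w)
      _ ≤ ∫ _ in s, M ∂μ := integral_mono_ae hint2.abs (integrable_const _) habs
      _ = M * (μ s).toReal := by
          rw [integral_const]; simp [Measure.restrict_apply_univ, smul_eq_mul, mul_comm, measureReal_def]
  rw [setAverage_eq, smul_eq_mul, measureReal_def]
  have heq : u z - (μ s).toReal⁻¹ * ∫ w in s, u w ∂μ
      = (μ s).toReal⁻¹ * ((μ s).toReal * u z - ∫ w in s, u w ∂μ) := by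
    field_simp
  rw [heq, ← h1, abs_mul, abs_of_pos (inv_pos.2 ha0)]
  calc (μ s).toReal⁻¹ * |∫ w in s, (u z - u w) ∂μ|
      ≤ (μ s).toReal⁻¹ * (M * (μ s).toReal) :=
        mul_le_mul_of_nonneg_left h2 (inv_pos.2 ha0).le
    _ = M := by field_simp

lemma setIntegral_le_of_subset' {f : X → ℝ} {s t : Set X} (hsub : s ⊆ t)
    (hfs : IntegrableOn f s μ) (hft : IntegrableOn f t μ)
    (h0s : 0 ≤ᵐ[μ.restrict s] f) (h0t : 0 ≤ᵐ[μ.restrict t] f) :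
    ∫ w in s, f w ∂μ ≤ ∫ w in t, f w ∂μ := by
  rw [integral_eq_lintegral_of_nonneg_ae h0s hfs.1,
      integral_eq_lintegral_of_nonneg_ae h0t hft.1]
  have hT : ∫⁻ w, ENNReal.ofReal (f w) ∂μ.restrict t ≠ ⊤ :=
    ((hasFiniteIntegral_iff_ofReal h0t).1 hft.2).ne
  exact ENNReal.toReal_mono hT (lintegral_mono' (Measure.restrict_mono hsub le_rfl) le_rfl)

lemma setIntegral_le_add_of_subset_union' {f : X → ℝ} {s t q : Set X} (hsub : s ⊆ t ∪ q)
    (hfs : IntegrableOn f s μ) (hft : IntegrableOn f t μ) (hfq : IntegrableOn f q μ)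
    (h0s : 0 ≤ᵐ[μ.restrict s] f) (h0t : 0 ≤ᵐ[μ.restrict t] f)
    (h0q : 0 ≤ᵐ[μ.restrict q] f) :
    ∫ w in s, f w ∂μ ≤ ∫ w in t, f w ∂μ + ∫ w in q, f w ∂μ := by
  rw [integral_eq_lintegral_of_nonneg_ae h0s hfs.1,
      integral_eq_lintegral_of_nonneg_ae h0t hft.1,
      integral_eq_lintegral_of_nonneg_ae h0q hfq.1]
  have hT : ∫⁻ w, ENNReal.ofReal (f w) ∂μ.restrict t ≠ ⊤ :=
    ((hasFiniteIntegral_iff_ofReal h0t).1 hft.2).ne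
  have hQ : ∫⁻ w, ENNReal.ofReal (f w) ∂μ.restrict q ≠ ⊤ :=
    ((hasFiniteIntegral_iff_ofReal h0q).1 hfq.2).ne
  have hmono : ∫⁻ w, ENNReal.ofReal (f w) ∂μ.restrict s ≤
      ∫⁻ w, ENNReal.ofReal (f w) ∂μ.restrict t +
        ∫⁻ w, ENNReal.ofReal (f w) ∂μ.restrict q := by
    calc ∫⁻ w, ENNReal.ofReal (f w) ∂μ.restrict s
        ≤ ∫⁻ w, ENNReal.ofReal (f w) ∂(μ.restrict t + μ.restrict q) :=
          lintegral_mono' (le_trans (Measure.restrict_mono hsub le_rfl)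
            (Measure.restrict_union_le _ _)) le_rfl
      _ = _ := lintegral_add_measure _ _ _
  have := ENNReal.toReal_mono (by exact ENNReal.add_ne_top.2 ⟨hT, hQ⟩) hmono
  rwa [ENNReal.toReal_add hT hQ] at this

/-- Key sandwich estimate: the averages over `s ⊆ S` differ by at most
`2 L μ(q) / μ(S)` where `q` is a set with `S ⊆ s ∪ q`, `q ⊆ S`, and `L`
bounds the oscillation of `u` on `S` around the average over `s`. -/
lemma abs_setAverage_sub_setAverage_le' {s S q : Set X} (hss : s ⊆ S) (hcov : S ⊆ s ∪ q)
    (hqS : q ⊆ S) (h0 : μ s ≠ 0) (hfin : μ S ≠ ⊤)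
    {u : X → ℝ} (hu : IntegrableOn u S μ) {L : ℝ}
    (hb : ∀ z ∈ S, |u z - ⨍ w in s, u w ∂μ| ≤ L) :
    |(⨍ w in S, u w ∂μ) - ⨍ w in s, u w ∂μ| ≤
      2 * L * (μ q).toReal / (μ S).toReal := by
  have hsfin : μ s ≠ ⊤ := fun h => hfin (top_le_iff.1 (h ▸ measure_mono hss))
  have hqfin : μ q ≠ ⊤ := fun h => hfin (top_le_iff.1 (h ▸ measure_mono hqS))
  have hS0 : μ S ≠ 0 := fun h =>
    h0 (le_antisymm (le_trans (measure_mono hss) h.le) zero_le')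
  set A : ℝ := ⨍ w in s, u w ∂μ with hA
  have ha0 : 0 < (μ s).toReal := ENNReal.toReal_pos h0 hsfin
  have hb0 : 0 < (μ S).toReal := ENNReal.toReal_pos hS0 hfin
  have hm0 : 0 ≤ (μ q).toReal := ENNReal.toReal_nonneg
  have hab : (μ s).toReal ≤ (μ S).toReal := ENNReal.toReal_mono hfin (measure_mono hss)
  have hbam : (μ S).toReal ≤ (μ s).toReal + (μ q).toReal := by
    have h1 : μ S ≤ μ s + μ q := le_trans (measure_mono hcov) (measure_union_le _ _)
    have h2 := ENNReal.toReal_mono (ENNReal.add_ne_top.2 ⟨hsfin, hqfin⟩) h1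
    rwa [ENNReal.toReal_add hsfin hqfin] at h2
  obtain ⟨z₀, hz₀⟩ := nonempty_of_measure_ne_zero h0
  have hL0 : 0 ≤ L := le_trans (abs_nonneg _) (hb z₀ (hss hz₀))
  have hus : IntegrableOn u s μ := hu.mono_set hss
  have huq : IntegrableOn u q μ := hu.mono_set hqS
  haveI : IsFiniteMeasure (μ.restrict S) :=
    ⟨by rw [Measure.restrict_apply_univ]; exact lt_top_iff_ne_top.2 hfin⟩
  haveI : IsFiniteMeasure (μ.restrict s) :=
    ⟨by rw [Measure.restrict_apply_univ]; exact lt_top_iff_ne_top.2 hsfin⟩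
  haveI : IsFiniteMeasure (μ.restrict q) :=
    ⟨by rw [Measure.restrict_apply_univ]; exact lt_top_iff_ne_top.2 hqfin⟩
  set f : X → ℝ := fun z => u z + (L - A) with hf
  have hfS : IntegrableOn f S μ := hu.add (integrable_const _)
  have hfs : IntegrableOn f s μ := hfS.mono_set hss
  have hfq : IntegrableOn f q μ := hfS.mono_set hqS
  -- a.e. nonnegativity of f on subsets of S
  have key_lb : ∀ T : Set X, T ⊆ S → IntegrableOn u T μ → 0 ≤ᵐ[μ.restrict T] f := by
    intro T hTS huT
    have hset : MeasurableSet {t : ℝ | A - L ≤ t} := measurableSet_Ici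
    have h1 : ∀ᵐ z ∂μ.restrict T, A - L ≤ u z := by
      refine ae_restrict_of_forall_mem' huT.1 hset (fun z hz => ?_)
      have := hb z (hTS hz); rw [abs_le] at this
      show A - L ≤ u z
      linarith [this.1]
    filter_upwards [h1] with z hz
    simp only [hf, Pi.zero_apply]
    linarith
  have aeS : 0 ≤ᵐ[μ.restrict S] f := key_lb S (fun _ h => h) hu
  have aes : 0 ≤ᵐ[μ.restrict s] f := key_lb s hss hus
  have aeq : 0 ≤ᵐ[μ.restrict q] f := key_lb q hqS huq
  have aeq_ub : f ≤ᵐ[μ.restrict q] fun _ => 2 * L := by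
    have hset : MeasurableSet {t : ℝ | t ≤ A + L} := measurableSet_Iic
    have h1 : ∀ᵐ z ∂μ.restrict q, u z ≤ A + L := by
      refine ae_restrict_of_forall_mem' huq.1 hset (fun z hz => ?_)
      have := hb z (hqS hz); rw [abs_le] at this
      show u z ≤ A + L
      linarith [this.2]
    filter_upwards [h1] with z hz
    simp only [hf]
    linarith
  -- integral computations
  have hAs : A * (μ s).toReal = ∫ w in s, u w ∂μ := by
    rw [hA, setAverage_eq, smul_eq_mul, measureReal_def]
    field_simp
  have E1 : ∫ w in s, f w ∂μ = L * (μ s).toReal := by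
    simp only [hf]
    rw [integral_add hus (integrable_const _), integral_const]
    simp only [measureReal_def, Measure.restrict_apply_univ, smul_eq_mul]
    rw [← hAs]; ring
  have E2 : ∫ w in S, f w ∂μ = (∫ w in S, u w ∂μ) + (L - A) * (μ S).toReal := by
    simp only [hf]
    rw [integral_add hu (integrable_const _), integral_const]
    simp only [measureReal_def, Measure.restrict_apply_univ, smul_eq_mul]
    ring
  have mono_low : ∫ w in s, f w ∂μ ≤ ∫ w in S, f w ∂μ :=
    setIntegral_le_of_subset' hss hfs hfS aes aeS
  have mono_up : ∫ w in S, f w ∂μ ≤ (∫ w in s, f w ∂μ) + ∫ w in q, f w ∂μ :=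
    setIntegral_le_add_of_subset_union' hcov hfS hfs hfq aeS aes aeq
  have bq : ∫ w in q, f w ∂μ ≤ 2 * L * (μ q).toReal := by
    calc ∫ w in q, f w ∂μ ≤ ∫ _ in q, 2 * L ∂μ :=
          integral_mono_ae hfq (integrable_const _) aeq_ub
      _ = 2 * L * (μ q).toReal := by
          rw [integral_const]; simp [Measure.restrict_apply_univ, smul_eq_mul, mul_comm, measureReal_def]
  have core : |(∫ w in S, u w ∂μ) - A * (μ S).toReal| ≤ 2 * L * (μ q).toReal := by
    have h1 : L * (μ s).toReal ≤ ∫ w in S, f w ∂μ := E1 ▸ mono_low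
    have h2 : ∫ w in S, f w ∂μ ≤ L * (μ s).toReal + 2 * L * (μ q).toReal := by
      refine le_trans mono_up ?_
      rw [E1]; linarith [bq]
    rw [abs_le]
    constructor
    · nlinarith [mul_le_mul_of_nonneg_left hbam hL0, mul_le_mul_of_nonneg_left hab hL0,
        mul_nonneg hL0 hm0]
    · nlinarith [mul_le_mul_of_nonneg_left hbam hL0, mul_le_mul_of_nonneg_left hab hL0,
        mul_nonneg hL0 hm0]
  have hfinal : (⨍ w in S, u w ∂μ) - A
      = (μ S).toReal⁻¹ * ((∫ w in S, u w ∂μ) - A * (μ S).toReal) := by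
    rw [setAverage_eq, smul_eq_mul, measureReal_def]
    field_simp
  rw [hfinal, abs_mul, abs_of_pos (inv_pos.2 hb0)]
  calc (μ S).toReal⁻¹ * |(∫ w in S, u w ∂μ) - A * (μ S).toReal|
      ≤ (μ S).toReal⁻¹ * (2 * L * (μ q).toReal) :=
        mul_le_mul_of_nonneg_left core (inv_pos.2 hb0).le
    _ = 2 * L * (μ q).toReal / (μ S).toReal := by
        rw [div_eq_inv_mul]

end Aux

/-- Under the δ-annular decay property, for a nonnegative β-Hölder
continuous `u` (Hölder seminorm at most `N`) with `0 < β`, `0 < α`, `α + β ≤ δ`,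
the function `v(x) = r^α u_{B(x,r)}` satisfies
`|v(x) − v(y)| ≤ C d(x,y)^{α+β} N` with `C` independent of `r, x, y, u`. -/
theorem averaged_function_holder_estimate
    {X : Type*} [MetricSpace X] [MeasurableSpace X] (μ : Measure X)
    (cd : ℝ≥0∞) (hcd : ∀ (z : X) (s : ℝ), 0 < s → μ (ball z (2 * s)) ≤ cd * μ (ball z s))
    (hball : ∀ (z : X) (s : ℝ), 0 < s → 0 < μ (ball z s) ∧ μ (ball z s) < ∞)
    (δ : ℝ) (hδ0 : 0 < δ) (hδ1 : δ ≤ 1)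
    (K : ℝ) (hK : 0 < K)
    (hann : ∀ (z : X) (R h : ℝ), 0 < R → 0 < h → h < R →
      μ (ball z R \ ball z (R - h)) ≤ ENNReal.ofReal (K * (h / R) ^ δ) * μ (ball z R))
    (α β : ℝ) (hα : 0 < α) (hβ : 0 < β) (hαβ : α + β ≤ δ) :
    ∃ C > (0 : ℝ), ∀ (u : X → ℝ) (N : ℝ), 0 ≤ N →
      (∀ z : X, 0 ≤ u z) →
      (∀ z w : X, |u z - u w| ≤ N * dist z w ^ β) →
      (∀ (z : X) (s : ℝ), 0 < s → IntegrableOn u (ball z s) μ) →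
      ∀ (r : ℝ), 0 < r → ∀ (x y : X),
        |r ^ α * (⨍ z in ball x r, u z ∂μ) - r ^ α * ⨍ z in ball y r, u z ∂μ| ≤
          C * dist x y ^ (α + β) * N := by
  refine ⟨3 + 6 * K * (4 : ℝ) ^ β, by positivity, ?_⟩
  intro u N hN hupos hHol hInt r hr x y
  rcases eq_or_ne x y with rfl | hxy
  · simp only [sub_self, abs_zero, dist_self]
    rw [Real.zero_rpow (by positivity : α + β ≠ 0)]
    simp
  have hd : 0 < dist x y := dist_pos.2 hxy
  set d : ℝ := dist x y with hdd
  have habs_factor : |r ^ α * (⨍ z in ball x r, u z ∂μ) - r ^ α * ⨍ z in ball y r, u z ∂μ|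
      = r ^ α * |(⨍ z in ball x r, u z ∂μ) - ⨍ z in ball y r, u z ∂μ| := by
    rw [← mul_sub, abs_mul, abs_of_pos (Real.rpow_pos_of_pos hr α)]
  have hrpow_pos : (0:ℝ) < r ^ α := Real.rpow_pos_of_pos hr α
  have hdab : (0:ℝ) ≤ d ^ (α + β) := Real.rpow_nonneg hd.le _
  rcases le_or_gt r d with hrd | hdr
  · -- Case 1 : r ≤ d
    have h1 : |u x - ⨍ z in ball x r, u z ∂μ| ≤ N * r ^ β := by
      refine abs_sub_setAverage_le' (hball x r hr).1.ne' (hball x r hr).2.ne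
        (hInt x r hr) x (fun w hw => ?_)
      calc |u x - u w| ≤ N * dist x w ^ β := hHol x w
        _ ≤ N * r ^ β := by
            refine mul_le_mul_of_nonneg_left ?_ hN
            exact Real.rpow_le_rpow dist_nonneg (le_of_lt (mem_ball'.1 hw)) hβ.le
    have h2 : |u y - ⨍ z in ball y r, u z ∂μ| ≤ N * r ^ β := by
      refine abs_sub_setAverage_le' (hball y r hr).1.ne' (hball y r hr).2.ne
        (hInt y r hr) y (fun w hw => ?_)
      calc |u y - u w| ≤ N * dist y w ^ β := hHol y w
        _ ≤ N * r ^ β := by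
            refine mul_le_mul_of_nonneg_left ?_ hN
            exact Real.rpow_le_rpow dist_nonneg (le_of_lt (mem_ball'.1 hw)) hβ.le
    have h3 : |u x - u y| ≤ N * d ^ β := hHol x y
    have htri : |(⨍ z in ball x r, u z ∂μ) - ⨍ z in ball y r, u z ∂μ|
        ≤ 2 * (N * r ^ β) + N * d ^ β := by
      have e1 : |(⨍ z in ball x r, u z ∂μ) - u x| = |u x - ⨍ z in ball x r, u z ∂μ| :=
        abs_sub_comm _ _
      calc |(⨍ z in ball x r, u z ∂μ) - ⨍ z in ball y r, u z ∂μ|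
          ≤ |(⨍ z in ball x r, u z ∂μ) - u x| + |u x - ⨍ z in ball y r, u z ∂μ| :=
            abs_sub_le _ _ _
        _ ≤ |(⨍ z in ball x r, u z ∂μ) - u x| + (|u x - u y|
              + |u y - ⨍ z in ball y r, u z ∂μ|) :=
            add_le_add_right (abs_sub_le _ _ _) _
        _ ≤ N * r ^ β + (N * d ^ β + N * r ^ β) := by
            rw [e1]
            exact add_le_add h1 (add_le_add h3 h2)
        _ = 2 * (N * r ^ β) + N * d ^ β := by ring
    rw [habs_factor]
    have hrab : r ^ α * r ^ β = r ^ (α + β) := (Real.rpow_add hr α β).symm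
    have hdab' : d ^ α * d ^ β = d ^ (α + β) := (Real.rpow_add hd α β).symm
    have i1 : r ^ (α + β) ≤ d ^ (α + β) := Real.rpow_le_rpow hr.le hrd (by positivity)
    have i2 : r ^ α ≤ d ^ α := Real.rpow_le_rpow hr.le hrd hα.le
    have hdβ : (0:ℝ) ≤ d ^ β := Real.rpow_nonneg hd.le _
    calc r ^ α * |(⨍ z in ball x r, u z ∂μ) - ⨍ z in ball y r, u z ∂μ|
        ≤ r ^ α * (2 * (N * r ^ β) + N * d ^ β) :=
          mul_le_mul_of_nonneg_left htri hrpow_pos.le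
      _ = 2 * N * (r ^ α * r ^ β) + N * (r ^ α * d ^ β) := by ring
      _ ≤ 2 * N * d ^ (α + β) + N * d ^ (α + β) := by
          have b1 : r ^ α * r ^ β ≤ d ^ (α + β) := by rw [hrab]; exact i1
          have b2 : r ^ α * d ^ β ≤ d ^ (α + β) := by
            rw [← hdab']
            exact mul_le_mul_of_nonneg_right i2 hdβ
          nlinarith
      _ = 3 * N * d ^ (α + β) := by ring
      _ ≤ (3 + 6 * K * (4:ℝ) ^ β) * d ^ (α + β) * N := by
          have h5 : (0:ℝ) ≤ 6 * K * (4:ℝ) ^ β * d ^ (α + β) * N := by positivity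
          nlinarith
  · -- Case 2 : d < r
    set B : Set X := ball x r with hB
    set B' : Set X := ball y r with hB'
    set S : Set X := ball x (r + d) with hS
    have hrd0 : 0 < r + d := by linarith
    have hSfin : μ S ≠ ⊤ := (hball x (r + d) hrd0).2.ne
    have hB0 : μ B ≠ 0 := (hball x r hr).1.ne'
    have hB'0 : μ B' ≠ 0 := (hball y r hr).1.ne'
    have huS : IntegrableOn u S μ := hInt x (r + d) hrd0
    have hBS : B ⊆ S := ball_subset_ball (by linarith)
    have hB'S : B' ⊆ S := ball_subset_ball' (by rw [dist_comm, ← hdd])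
    set L : ℝ := N * (4 * r) ^ β with hL
    have hL0 : 0 ≤ L := by positivity
    -- oscillation bounds on S
    have hbB : ∀ z ∈ S, |u z - ⨍ w in B, u w ∂μ| ≤ L := by
      intro z hz
      refine abs_sub_setAverage_le' hB0 (fun h => hSfin (top_le_iff.1
        (h ▸ measure_mono hBS))) (huS.mono_set hBS) z (fun w hw => ?_)
      have hzw : dist z w ≤ 4 * r := by
        have hx1 : dist z x < r + d := mem_ball.1 hz
        have hx2 : dist x w < r := mem_ball'.1 hw
        calc dist z w ≤ dist z x + dist x w := dist_triangle _ _ _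
          _ ≤ 4 * r := by linarith
      calc |u z - u w| ≤ N * dist z w ^ β := hHol z w
        _ ≤ L := by
            rw [hL]
            exact mul_le_mul_of_nonneg_left
              (Real.rpow_le_rpow dist_nonneg hzw hβ.le) hN
    have hbB' : ∀ z ∈ S, |u z - ⨍ w in B', u w ∂μ| ≤ L := by
      intro z hz
      refine abs_sub_setAverage_le' hB'0 (fun h => hSfin (top_le_iff.1
        (h ▸ measure_mono hB'S))) (huS.mono_set hB'S) z (fun w hw => ?_)
      have hzw : dist z w ≤ 4 * r := by
        have hx1 : dist z x < r + d := mem_ball.1 hz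
        have hx2 : dist y w < r := mem_ball'.1 hw
        have hx3 : dist x y = d := hdd.symm
        calc dist z w ≤ dist z x + dist x y + dist y w := dist_triangle4 _ _ _ _
          _ ≤ 4 * r := by rw [hx3]; linarith
      calc |u z - u w| ≤ N * dist z w ^ β := hHol z w
        _ ≤ L := by
            rw [hL]
            exact mul_le_mul_of_nonneg_left
              (Real.rpow_le_rpow dist_nonneg hzw hβ.le) hN
    -- annuli
    set q : Set X := S \ ball x r with hq
    set q' : Set X := S \ ball x (r - d) with hq'
    have hcov1 : S ⊆ B ∪ q := fun z hz => by
      by_cases h : z ∈ B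
      · exact Or.inl h
      · exact Or.inr ⟨hz, h⟩
    have hcov2 : S ⊆ B' ∪ q' := by
      intro z hz
      by_cases h : z ∈ B'
      · exact Or.inl h
      · refine Or.inr ⟨hz, fun hzb => h ?_⟩
        have hx1 : dist z x < r - d := mem_ball.1 hzb
        have hx2 : dist z y ≤ dist z x + dist x y := dist_triangle _ _ _
        rw [← hdd] at hx2
        exact mem_ball.2 (by linarith)
    have hqS : q ⊆ S := Set.diff_subset
    have hq'S : q' ⊆ S := Set.diff_subset
    have hbS0 : 0 < (μ S).toReal :=
      ENNReal.toReal_pos (fun h => hB0 (le_antisymm (le_trans (measure_mono hBS) h.le)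
        zero_le')) hSfin
    -- annular decay bounds
    have hm1 : (μ q).toReal ≤ K * (d / (r + d)) ^ δ * (μ S).toReal := by
      have t1 := hann x (r + d) d hrd0 hd (by linarith)
      rw [show r + d - d = r by ring] at t1
      calc (μ q).toReal ≤ (ENNReal.ofReal (K * (d / (r + d)) ^ δ) * μ S).toReal :=
            ENNReal.toReal_mono (ENNReal.mul_ne_top ENNReal.ofReal_ne_top hSfin) t1
        _ = K * (d / (r + d)) ^ δ * (μ S).toReal := by
            rw [ENNReal.toReal_mul, ENNReal.toReal_ofReal (by positivity)]
    have hm2 : (μ q').toReal ≤ K * (2 * d / (r + d)) ^ δ * (μ S).toReal := by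
      have t1 := hann x (r + d) (2 * d) hrd0 (by linarith) (by linarith)
      rw [show r + d - 2 * d = r - d by ring] at t1
      calc (μ q').toReal ≤ (ENNReal.ofReal (K * (2 * d / (r + d)) ^ δ) * μ S).toReal :=
            ENNReal.toReal_mono (ENNReal.mul_ne_top ENNReal.ofReal_ne_top hSfin) t1
        _ = K * (2 * d / (r + d)) ^ δ * (μ S).toReal := by
            rw [ENNReal.toReal_mul, ENNReal.toReal_ofReal (by positivity)]
    -- averages comparison
    have hA1 : |(⨍ w in S, u w ∂μ) - ⨍ w in B, u w ∂μ|
        ≤ 2 * L * (μ q).toReal / (μ S).toReal :=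
      abs_setAverage_sub_setAverage_le' hBS hcov1 hqS hB0 hSfin huS hbB
    have hA2 : |(⨍ w in S, u w ∂μ) - ⨍ w in B', u w ∂μ|
        ≤ 2 * L * (μ q').toReal / (μ S).toReal :=
      abs_setAverage_sub_setAverage_le' hB'S hcov2 hq'S hB'0 hSfin huS hbB'
    -- bound the ratios
    have hpowd : (d / (r + d)) ^ δ ≤ (d / r) ^ δ :=
      Real.rpow_le_rpow (by positivity)
        (div_le_div_of_nonneg_left hd.le hr (by linarith)) hδ0.le
    have hratio1 : 2 * L * (μ q).toReal / (μ S).toReal ≤ 2 * L * K * (d / r) ^ δ := by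
      rw [div_le_iff₀ hbS0]
      calc 2 * L * (μ q).toReal
          ≤ 2 * L * (K * (d / (r + d)) ^ δ * (μ S).toReal) :=
            mul_le_mul_of_nonneg_left hm1 (by positivity)
        _ ≤ 2 * L * (K * (d / r) ^ δ * (μ S).toReal) := by
            refine mul_le_mul_of_nonneg_left ?_ (by positivity)
            exact mul_le_mul_of_nonneg_right
              (mul_le_mul_of_nonneg_left hpowd hK.le) hbS0.le
        _ = 2 * L * K * (d / r) ^ δ * (μ S).toReal := by ring
    have hratio2 : 2 * L * (μ q').toReal / (μ S).toReal
        ≤ 2 * L * K * (2 * (d / r) ^ δ) := by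
      rw [div_le_iff₀ hbS0]
      have hdr1 : 2 * d / (r + d) ≤ 2 * (d / r) := by
        have e1 : 2 * d / (r + d) = 2 * (d / (r + d)) := by ring
        rw [e1]
        have := div_le_div_of_nonneg_left hd.le hr (by linarith : r ≤ r + d)
        linarith
      have hpow : (2 * d / (r + d)) ^ δ ≤ (2 * (d / r)) ^ δ :=
        Real.rpow_le_rpow (by positivity) hdr1 hδ0.le
      have hpow2 : (2 * (d / r)) ^ δ = 2 ^ δ * (d / r) ^ δ :=
        Real.mul_rpow (by norm_num) (by positivity)
      have h2le : (2:ℝ) ^ δ ≤ 2 := by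
        calc (2:ℝ) ^ δ ≤ 2 ^ (1:ℝ) :=
              Real.rpow_le_rpow_of_exponent_le (by norm_num) hδ1
          _ = 2 := Real.rpow_one 2
      have hpow3 : (2 * d / (r + d)) ^ δ ≤ 2 * (d / r) ^ δ := by
        refine le_trans hpow ?_
        rw [hpow2]
        exact mul_le_mul_of_nonneg_right h2le (by positivity)
      calc 2 * L * (μ q').toReal
          ≤ 2 * L * (K * (2 * d / (r + d)) ^ δ * (μ S).toReal) :=
            mul_le_mul_of_nonneg_left hm2 (by positivity)
        _ ≤ 2 * L * (K * (2 * (d / r) ^ δ) * (μ S).toReal) := by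
            refine mul_le_mul_of_nonneg_left ?_ (by positivity)
            exact mul_le_mul_of_nonneg_right
              (mul_le_mul_of_nonneg_left hpow3 hK.le) hbS0.le
        _ = 2 * L * K * (2 * (d / r) ^ δ) * (μ S).toReal := by ring
    have htot : |(⨍ z in ball x r, u z ∂μ) - ⨍ z in ball y r, u z ∂μ|
        ≤ 6 * L * K * (d / r) ^ δ := by
      calc |(⨍ z in ball x r, u z ∂μ) - ⨍ z in ball y r, u z ∂μ|
          ≤ |(⨍ z in ball x r, u z ∂μ) - ⨍ w in S, u w ∂μ|
            + |(⨍ w in S, u w ∂μ) - ⨍ z in ball y r, u z ∂μ| := abs_sub_le _ _ _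
        _ = |(⨍ w in S, u w ∂μ) - ⨍ z in ball x r, u z ∂μ|
            + |(⨍ w in S, u w ∂μ) - ⨍ z in ball y r, u z ∂μ| := by
            rw [abs_sub_comm (⨍ z in ball x r, u z ∂μ) (⨍ w in S, u w ∂μ)]
        _ ≤ 2 * L * K * (d / r) ^ δ + 2 * L * K * (2 * (d / r) ^ δ) :=
            add_le_add (le_trans hA1 hratio1) (le_trans hA2 hratio2)
        _ = 6 * L * K * (d / r) ^ δ := by ring
    rw [habs_factor]
    -- core rpow computation
    have hcore : r ^ α * r ^ β * (d / r) ^ δ ≤ d ^ (α + β) := by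
      have hdr01 : d / r ≤ 1 := (div_le_one hr).2 hdr.le
      have hdr00 : 0 < d / r := div_pos hd hr
      have hp1 : (d / r) ^ δ ≤ (d / r) ^ (α + β) :=
        Real.rpow_le_rpow_of_exponent_ge hdr00 hdr01 hαβ
      have hp2 : r ^ α * r ^ β = r ^ (α + β) := (Real.rpow_add hr α β).symm
      calc r ^ α * r ^ β * (d / r) ^ δ ≤ r ^ (α + β) * (d / r) ^ (α + β) := by
            rw [hp2]
            exact mul_le_mul_of_nonneg_left hp1 (Real.rpow_nonneg hr.le _)
        _ = (r * (d / r)) ^ (α + β) := (Real.mul_rpow hr.le (by positivity)).symm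
        _ = d ^ (α + β) := by rw [mul_comm, div_mul_cancel₀ _ hr.ne']
    have hfourβ : (4 * r) ^ β = 4 ^ β * r ^ β := Real.mul_rpow (by norm_num) hr.le
    calc r ^ α * |(⨍ z in ball x r, u z ∂μ) - ⨍ z in ball y r, u z ∂μ|
        ≤ r ^ α * (6 * L * K * (d / r) ^ δ) :=
          mul_le_mul_of_nonneg_left htot hrpow_pos.le
      _ = 6 * K * (4:ℝ) ^ β * N * (r ^ α * r ^ β * (d / r) ^ δ) := by
          rw [hL, hfourβ]; ring
      _ ≤ 6 * K * (4:ℝ) ^ β * N * d ^ (α + β) := by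
          exact mul_le_mul_of_nonneg_left hcore (by positivity)
      _ ≤ (3 + 6 * K * (4:ℝ) ^ β) * d ^ (α + β) * N := by
          nlinarith [mul_nonneg hdab hN]
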